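/- Let V be a finite-dimensional complex vector space with exterior algebra ⋀V*, let σ ∈ ⋀²V* be a 2-form on V of rank 2n (σ^n ≠ 0, σ^{n+1} = 0 on the relevant graded piece — assume dim V = 2n and σ nondegenerate). Suppose ξ ∈ V and β ∈ V* satisfy β = ι_ξ σ (contraction of σ by ξ). If α ∈ ⋀^{n−k}V* is primitive (σ^{k+1} ∧ α = 0), and β ∧ α = γ₀ + σ ∧ γ₁ is the Lefschetz decomposition with γ₀ ∈ ⋀^{n−k+1}V*, γ₁ ∈ ⋀^{n−k−1}V* primitive, then ι_ξ α = −(k+1)γ₁. -/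

import Mathlib

open ExteriorAlgebra

/-- The `i`-th graded piece `⋀^i M` of the exterior algebra of `M`. -/
noncomputable def extGrade (M : Type*) [AddCommGroup M] [Module ℂ M] (i : ℕ) :
    Submodule ℂ (ExteriorAlgebra ℂ M) :=
  (LinearMap.range (ExteriorAlgebra.ι ℂ : M →ₗ[ℂ] ExteriorAlgebra ℂ M)) ^ i

section Aux

variable {M : Type*} [AddCommGroup M] [Module ℂ M] (ξ : Module.Dual ℂ M)

local notation "L" => (LinearMap.range (ExteriorAlgebra.ι ℂ : M →ₗ[ℂ] ExteriorAlgebra ℂ M))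

/-- derivation property for degree-2 elements -/
lemma aux_der {σ : ExteriorAlgebra ℂ M} (hσ : σ ∈ L ^ 2) (y : ExteriorAlgebra ℂ M) :
    CliffordAlgebra.contractLeft ξ (σ * y)
      = CliffordAlgebra.contractLeft ξ σ * y + σ * CliffordAlgebra.contractLeft ξ y := by
  rw [pow_two] at hσ
  refine Submodule.mul_induction_on hσ ?_ ?_
  · rintro a ⟨v, rfl⟩ b ⟨w, rfl⟩
    rw [mul_assoc, CliffordAlgebra.contractLeft_ι_mul, CliffordAlgebra.contractLeft_ι_mul,
      CliffordAlgebra.contractLeft_ι_mul, CliffordAlgebra.contractLeft_ι]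
    simp only [mul_sub, sub_mul, smul_mul_assoc, mul_smul_comm, mul_assoc,
      Algebra.algebraMap_eq_smul_one, one_mul, mul_one]
    abel
  · intro x y' ihx ihy
    simp only [add_mul, map_add, ihx, ihy]
    abel

lemma aux_beta_mem {σ : ExteriorAlgebra ℂ M} (hσ : σ ∈ L ^ 2) :
    CliffordAlgebra.contractLeft ξ σ ∈ L := by
  rw [pow_two] at hσ
  refine Submodule.mul_induction_on hσ ?_ ?_
  · rintro a ⟨v, rfl⟩ b ⟨w, rfl⟩
    rw [CliffordAlgebra.contractLeft_ι_mul, CliffordAlgebra.contractLeft_ι]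
    have : (ExteriorAlgebra.ι ℂ v : ExteriorAlgebra ℂ M) * algebraMap ℂ _ (ξ w)
        = ξ w • ExteriorAlgebra.ι ℂ v := by
      rw [Algebra.algebraMap_eq_smul_one, mul_smul_comm, mul_one]
    rw [this]
    exact Submodule.sub_mem _ (Submodule.smul_mem _ _ ⟨w, rfl⟩) (Submodule.smul_mem _ _ ⟨v, rfl⟩)
  · intro x y ihx ihy
    rw [map_add]; exact Submodule.add_mem _ ihx ihy

/-- degree-2 elements commute with degree-1 elements -/
lemma aux_comm {σ b : ExteriorAlgebra ℂ M} (hσ : σ ∈ L ^ 2) (hb : b ∈ L) :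
    σ * b = b * σ := by
  rw [pow_two] at hσ
  refine Submodule.mul_induction_on hσ ?_ ?_
  · rintro a ⟨v, rfl⟩ c ⟨w, rfl⟩
    obtain ⟨u, rfl⟩ := hb
    have h1 : ∀ x y : M, (ExteriorAlgebra.ι ℂ x : ExteriorAlgebra ℂ M) * ExteriorAlgebra.ι ℂ y
        = -(ExteriorAlgebra.ι ℂ y * ExteriorAlgebra.ι ℂ x) := fun x y =>
      eq_neg_of_add_eq_zero_left (ExteriorAlgebra.ι_add_mul_swap x y)
    rw [mul_assoc, h1 w u, mul_neg, ← mul_assoc, h1 v u, neg_mul, neg_neg, mul_assoc]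
  · intro x y ihx ihy
    rw [add_mul, mul_add, ihx, ihy]

/-- contraction lowers the degree -/
lemma aux_lower : ∀ (m : ℕ) {x : ExteriorAlgebra ℂ M}, x ∈ L ^ (m + 1) →
    CliffordAlgebra.contractLeft ξ x ∈ L ^ m := by
  intro m
  induction m with
  | zero =>
    intro x hx
    rw [pow_one] at hx
    obtain ⟨v, rfl⟩ := hx
    rw [CliffordAlgebra.contractLeft_ι, pow_zero]
    exact Submodule.algebraMap_mem _
  | succ m ih =>
    intro x hx
    rw [pow_succ'] at hx
    refine Submodule.mul_induction_on hx ?_ ?_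
    · rintro a ⟨v, rfl⟩ b hb
      rw [CliffordAlgebra.contractLeft_ι_mul]
      refine Submodule.sub_mem _ (Submodule.smul_mem _ _ hb) ?_
      rw [pow_succ']
      exact Submodule.mul_mem_mul ⟨v, rfl⟩ (ih hb)
    · intro x y ihx ihy
      rw [map_add]; exact Submodule.add_mem _ ihx ihy

end Aux

/-- Work in the exterior algebra of a `2n`-dimensional space (we write `M`
for the space of `1`-forms, `ι_ξ` for contraction with `ξ`, realized by the dual element
`ξ ∈ Module.Dual ℂ M`).  Let `σ` be a nondegenerate `2`-form (nondegeneracy in the relevant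
degree is expressed by the injectivity of `σ^{k+1}∧ : ⋀^{n−k−1} → ⋀^{n+k+1}`), let
`β = ι_ξ σ`, let `α ∈ ⋀^{n−k}` be primitive (`σ^{k+1} ∧ α = 0`), and let
`β ∧ α = γ₀ + σ ∧ γ₁` be the Lefschetz decomposition with `γ₀ ∈ ⋀^{n−k+1}`,
`γ₁ ∈ ⋀^{n−k−1}` primitive.  Then `ι_ξ α = −(k+1)·γ₁`. -/
theorem stmt8 {M : Type*} [AddCommGroup M] [Module ℂ M]
    (n k : ℕ) (hkn : k + 1 ≤ n)
    (ξ : Module.Dual ℂ M)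
    (σ : ExteriorAlgebra ℂ M) (hσ : σ ∈ extGrade M 2)
    (hinj : ∀ x ∈ extGrade M (n - k - 1), ∀ y ∈ extGrade M (n - k - 1),
      σ ^ (k + 1) * x = σ ^ (k + 1) * y → x = y)
    (α : ExteriorAlgebra ℂ M) (hα : α ∈ extGrade M (n - k))
    (hαprim : σ ^ (k + 1) * α = 0)
    (γ₀ γ₁ : ExteriorAlgebra ℂ M)
    (hγ₀ : γ₀ ∈ extGrade M (n - k + 1)) (hγ₀prim : σ ^ k * γ₀ = 0)
    (hγ₁ : γ₁ ∈ extGrade M (n - k - 1)) (hγ₁prim : σ ^ (k + 2) * γ₁ = 0)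
    (hdec : CliffordAlgebra.contractLeft ξ σ * α = γ₀ + σ * γ₁) :
    CliffordAlgebra.contractLeft ξ α = (-((k : ℂ) + 1)) • γ₁ := by
  set β := CliffordAlgebra.contractLeft ξ σ with hβ
  have hσL : σ ∈ (LinearMap.range (ExteriorAlgebra.ι ℂ : M →ₗ[ℂ] ExteriorAlgebra ℂ M)) ^ 2 := hσ
  have hβL := aux_beta_mem ξ hσL
  have hcomm : σ * β = β * σ := aux_comm hσL hβL
  -- contraction of powers of σ
  have hpow : ∀ m : ℕ, CliffordAlgebra.contractLeft ξ (σ ^ (m + 1))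
      = ((m : ℂ) + 1) • (σ ^ m * β) := by
    intro m
    induction m with
    | zero => simp [hβ]
    | succ m ih =>
      rw [pow_succ' σ (m + 1), aux_der ξ hσL, ih, ← hβ]
      have hc : β * σ ^ (m + 1) = σ ^ (m + 1) * β := by
        induction (m + 1) with
        | zero => simp
        | succ j ihj =>
          rw [pow_succ, ← mul_assoc, ihj, mul_assoc, ← hcomm, ← mul_assoc]
      rw [hc, mul_smul_comm, ← mul_assoc, ← pow_succ']
      push_cast
      simp only [add_smul, one_smul]
      abel
  -- derivation property for powers of σ
  have hderpow : ∀ (m : ℕ) (y : ExteriorAlgebra ℂ M),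
      CliffordAlgebra.contractLeft ξ (σ ^ m * y)
        = CliffordAlgebra.contractLeft ξ (σ ^ m) * y + σ ^ m * CliffordAlgebra.contractLeft ξ y := by
    intro m
    induction m with
    | zero => intro y; simp [CliffordAlgebra.contractLeft_one]
    | succ m ih =>
      intro y
      rw [pow_succ', mul_assoc, aux_der ξ hσL, ih, aux_der ξ hσL]
      simp only [mul_add, add_mul, mul_assoc]
      abel
  -- main computation
  have key : σ ^ (k + 1) * CliffordAlgebra.contractLeft ξ α
      = σ ^ (k + 1) * ((-((k : ℂ) + 1)) • γ₁) := by
    have h0 : CliffordAlgebra.contractLeft ξ (σ ^ (k + 1) * α) = 0 := by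
      rw [hαprim, map_zero]
    rw [hderpow (k + 1) α, hpow k] at h0
    have h1 : ((k : ℂ) + 1) • (σ ^ k * β) * α = ((k : ℂ) + 1) • (σ ^ (k + 1) * γ₁) := by
      rw [smul_mul_assoc, mul_assoc, hdec, mul_add, ← mul_assoc, ← pow_succ]
      have : σ ^ k * γ₀ = 0 := hγ₀prim
      rw [this, zero_add]
    rw [h1] at h0
    have := eq_neg_of_add_eq_zero_right h0
    rw [this, ← neg_smul, mul_smul_comm]
  exact hinj _ (aux_lower ξ _ (by
      have : n - k - 1 + 1 = n - k := by omega
      rw [this]; exact hα)) _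
    (Submodule.smul_mem _ _ hγ₁) key
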